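/- Let (Ω, m₀, P) be a probability space, ι a linearly ordered index set, and ℱ a filtration on Ω indexed by ι with ℱ t ≤ m₀ for every t, such that P is sigma-finite on the trace of each ℱ t. Let D : Ω → ℝ be m₀-strongly measurable, nonnegative, integrable with ∫ D dP = 1, and define the probability measure Q := P.withDensity (fun ω => ENNReal.ofReal (D ω)) and the density process Z t := E_P[D | ℱ t] (conditional expectation under P). Let M : ι → Ω → ℝ be adapted to ℱ, with M t integrable with respect to Q and (fun ω => M t ω * Z t ω) integrable with respect to P for every t. Then M is a martingale with respect to ℱ under Q if and only if the process t ↦ M t * Z t is a martingale with respect to ℱ under P. -/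

import Mathlib

open MeasureTheory
open scoped NNReal ENNReal

/-- Bayes change-of-measure rule for martingales, underlying the proof of
Proposition 3: with `Z t := E_P[D | ℱ t]` the density process of
`Q = D · P`, a process `M` is a `Q`-martingale exactly when the product
process `M * Z` is a `P`-martingale. -/
theorem martingale_withDensity_iff_mul_condexp_martingale
    {Ω ι : Type*} [LinearOrder ι] {m₀ : MeasurableSpace Ω}
    (P : Measure Ω) [IsProbabilityMeasure P]
    (ℱ : Filtration ι m₀)
    [∀ t, SigmaFinite (P.trim (ℱ.le t))]
    (D : Ω → ℝ) (hDmeas : StronglyMeasurable D)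
    (hDnn : 0 ≤ D) (hDint : Integrable D P)
    (hDnorm : ∫ ω, D ω ∂P = 1)
    (M : ι → Ω → ℝ) (hadp : Adapted ℱ M)
    (hMQ : ∀ t, Integrable (M t) (P.withDensity fun ω => ENNReal.ofReal (D ω)))
    (hMZ : ∀ t, Integrable (fun ω => M t ω * (P[D | ℱ t]) ω) P) :
    Martingale M ℱ (P.withDensity fun ω => ENNReal.ofReal (D ω)) ↔
      Martingale (fun t ω => M t ω * (P[D | ℱ t]) ω) ℱ P := by
  set Q := P.withDensity fun ω => ENNReal.ofReal (D ω) with hQdef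
  have hDm : Measurable D := hDmeas.measurable
  have hnnm : Measurable fun ω => (D ω).toNNReal := hDm.real_toNNReal
  have hQ : Q = P.withDensity fun ω => (((D ω).toNNReal : ℝ≥0) : ℝ≥0∞) := rfl
  -- Q is a probability measure
  have hQprob : IsProbabilityMeasure Q := by
    constructor
    rw [hQdef, withDensity_apply _ MeasurableSet.univ, setLIntegral_univ,
      ← ofReal_integral_eq_lintegral_ofReal hDint (Filter.Eventually.of_forall hDnn),
      hDnorm, ENNReal.ofReal_one]
  haveI := hQprob
  -- set integrals under Q
  have key : ∀ (g : Ω → ℝ) (s : Set Ω), MeasurableSet s →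
      ∫ x in s, g x ∂Q = ∫ x in s, D x * g x ∂P := by
    intro g s hs
    rw [hQ, setIntegral_withDensity_eq_setIntegral_smul hnnm _ hs]
    refine setIntegral_congr_fun hs fun x _ => ?_
    simp [NNReal.smul_def, Real.coe_toNNReal _ (hDnn x)]
  -- integrability of M t * D
  have hMD : ∀ t, Integrable (fun ω => M t ω * D ω) P := by
    intro t
    have h := (integrable_withDensity_iff_integrable_smul hnnm).mp ((hQ ▸ hMQ t))
    refine h.congr (Filter.Eventually.of_forall fun x => ?_)
    simp [NNReal.smul_def, Real.coe_toNNReal _ (hDnn x), mul_comm]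
  -- pull-out property
  have hpull : ∀ t, (fun ω => M t ω * (P[D|ℱ t]) ω) =ᵐ[P] P[fun ω => M t ω * D ω | ℱ t] := by
    intro t
    exact (condExp_mul_of_stronglyMeasurable_left (hadp t).stronglyMeasurable (hMD t) hDint).symm
  -- key set-integral identity
  have hint_eq : ∀ (t : ι) (A : Set Ω), MeasurableSet[ℱ t] A →
      ∫ x in A, M t x * (P[D|ℱ t]) x ∂P = ∫ x in A, M t x ∂Q := by
    intro t A hA
    rw [key (M t) A (ℱ.le t A hA),
      setIntegral_congr_ae (ℱ.le t A hA) ((hpull t).mono fun x hx _ => hx),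
      setIntegral_condExp (ℱ.le t) (hMD t) hA]
    exact setIntegral_congr_fun (ℱ.le t A hA) fun x _ => mul_comm _ _
  haveI : SigmaFiniteFiltration P ℱ := ⟨fun i => inferInstance⟩
  haveI : SigmaFiniteFiltration Q ℱ := ⟨fun i => inferInstance⟩
  constructor
  · intro hQm
    refine ⟨fun t => (hadp.stronglyAdapted t).mul stronglyMeasurable_condExp, fun s t hst => ?_⟩
    refine (ae_eq_condExp_of_forall_setIntegral_eq (ℱ.le s) (hMZ t)
      (fun A hA _ => (hMZ s).integrableOn) (fun A hA _ => ?_)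
      ((hadp.stronglyAdapted s).mul stronglyMeasurable_condExp).aestronglyMeasurable).symm
    rw [hint_eq s A hA, hint_eq t A (ℱ.mono hst A hA)]
    exact hQm.setIntegral_eq hst hA
  · intro hPm
    refine ⟨hadp.stronglyAdapted, fun s t hst => ?_⟩
    refine (ae_eq_condExp_of_forall_setIntegral_eq (ℱ.le s) (hMQ t)
      (fun A hA _ => (hMQ s).integrableOn) (fun A hA _ => ?_)
      (hadp.stronglyAdapted s).aestronglyMeasurable).symm
    rw [← hint_eq s A hA, ← hint_eq t A (ℱ.mono hst A hA)]
    exact hPm.setIntegral_eq hst hA
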